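/- Let $\lambda>1$, $T>0$, $a>0$, $b>0$. Suppose $y\in C^0([0,T))\cap C^1((0,T))$ satisfies $y(t)>0$ for all $t\in[0,T)$, $h\in L^1_{loc}(\mathbb{R})$ satisfies $h\ge 0$ a.e., $\int_{\max(t-1,0)}^t h(s)\,ds\le b$ for all $t\in(0,T)$, and $y'(t)+a y^\lambda(t)\le h(t)y(t)$ for all $t\in(0,T)$. Then $y(t)\le \max\{y(0)e^b,\ (a(\lambda-1))^{-1/(\lambda-1)} e^b\}$ for all $t\in[0,T)$. -/

import Mathlib

open MeasureTheory Set intervalIntegral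

/-- scalar step inequality: `μ Δ e^{-μx} ≤ e^{με}(e^{-μx} - e^{-μ(x+Δ)})` for `0 ≤ Δ ≤ ε`. -/
lemma step_ineq {μ x Δ ε : ℝ} (hμ : 0 < μ) (hΔ : 0 ≤ Δ) (hΔε : Δ ≤ ε) :
    μ * Δ * Real.exp (-μ * x) ≤ Real.exp (μ * ε) * (Real.exp (-μ * x) - Real.exp (-μ * (x + Δ))) := by
  have h1 : Real.exp (-μ * (x + Δ)) = Real.exp (-μ * x) * Real.exp (-(μ * Δ)) := by
    rw [← Real.exp_add]; ring_nf
  rw [h1]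
  have hex : (0:ℝ) < Real.exp (-μ * x) := Real.exp_pos _
  rw [show Real.exp (-μ*x) - Real.exp (-μ*x) * Real.exp (-(μ*Δ))
      = Real.exp (-μ*x) * (1 - Real.exp (-(μ*Δ))) by ring]
  have key : μ * Δ ≤ Real.exp (μ * ε) * (1 - Real.exp (-(μ * Δ))) := by
    have h2 : Real.exp (μ * Δ) ≤ Real.exp (μ * ε) :=
      Real.exp_le_exp.2 (by nlinarith)
    have h3 : (0:ℝ) ≤ 1 - Real.exp (-(μ * Δ)) := by
      have : Real.exp (-(μ * Δ)) ≤ 1 := Real.exp_le_one_iff.2 (by nlinarith)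
      linarith
    have h4 : μ * Δ ≤ Real.exp (μ * Δ) * (1 - Real.exp (-(μ * Δ))) := by
      have h5 : Real.exp (μ*Δ) * Real.exp (-(μ*Δ)) = 1 := by
        rw [← Real.exp_add]; simp
      have h6 : μ * Δ + 1 ≤ Real.exp (μ * Δ) := Real.add_one_le_exp _
      nlinarith
    calc μ * Δ ≤ Real.exp (μ*Δ) * (1 - Real.exp (-(μ*Δ))) := h4
      _ ≤ Real.exp (μ*ε) * (1 - Real.exp (-(μ*Δ))) := by nlinarith
  nlinarith

/-- Key Grönwall-type integral inequality for the primitive of a nonnegative integrable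
function. -/
lemma key_L2 {s t μ : ℝ} (hst : s < t) (hμ : 0 < μ) {h : ℝ → ℝ}
    (hint : IntegrableOn h (Icc s t)) (hnn : ∀ᵐ r, 0 ≤ h r) :
    μ * ∫ r in s..t, h r * Real.exp (-μ * ∫ u in s..r, h u)
      ≤ 1 - Real.exp (-μ * ∫ u in s..t, h u) := by
  set H : ℝ → ℝ := fun r => ∫ u in s..r, h u with hH
  have hHcont : ContinuousOn H (Icc s t) := by
    have := intervalIntegral.continuousOn_primitive_interval
      (f := h) (μ := volume) (a := s) (b := t) (by rwa [uIcc_of_le hst.le])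
    rwa [uIcc_of_le hst.le] at this
  have hii : ∀ u v : ℝ, u ∈ Icc s t → v ∈ Icc s t → IntervalIntegrable h volume u v := by
    intro u v hu hv
    apply (hint.mono_set _).intervalIntegrable
    exact uIcc_subset_Icc hu hv
  have hHmono : ∀ u ∈ Icc s t, ∀ v ∈ Icc s t, u ≤ v → H u ≤ H v := by
    intro u hu v hv huv
    have h1 : H v - H u = ∫ r in u..v, h r :=
      integral_interval_sub_left (hii s v (left_mem_Icc.2 hst.le) hv)
        (hii s u (left_mem_Icc.2 hst.le) hu)
    have h2 : 0 ≤ ∫ r in u..v, h r := integral_nonneg_of_ae huv hnn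
    linarith
  have hHs : H s = 0 := by simp [hH]
  have hHtnn : 0 ≤ H t := by
    have := hHmono s (left_mem_Icc.2 hst.le) t (right_mem_Icc.2 hst.le) hst.le
    linarith [hHs ▸ this]
  have hecont : ContinuousOn (fun r => Real.exp (-μ * H r)) (Icc s t) :=
    Real.continuous_exp.comp_continuousOn (continuousOn_const.mul hHcont)
  have hfint : IntegrableOn (fun r => h r * Real.exp (-μ * H r)) (Icc s t) :=
    hint.mul_continuousOn hecont isCompact_Icc
  -- reduce to the ε-version
  have main : ∀ ε > (0:ℝ), μ * ∫ r in s..t, h r * Real.exp (-μ * H r)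
      ≤ Real.exp (μ * ε) * (1 - Real.exp (-μ * H t)) := by
    intro ε hε
    -- uniform continuity of H
    have hUC := isCompact_Icc.uniformContinuousOn_of_continuous hHcont
    rw [Metric.uniformContinuousOn_iff] at hUC
    obtain ⟨δ, hδ, hδ'⟩ := hUC ε hε
    obtain ⟨n, hn⟩ := exists_nat_gt (max 1 ((t - s) / δ))
    have hn1 : (1:ℝ) ≤ n := le_trans (le_max_left _ _) hn.le
    have hn0 : (0:ℝ) < n := by linarith
    have hnd : (t - s) / δ < n := lt_of_le_of_lt (le_max_right _ _) hn
    set c : ℝ := (t - s) / n with hc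
    have hc0 : 0 < c := div_pos (by linarith) hn0
    have hcδ : c < δ := by
      rw [hc, div_lt_iff₀ hn0]
      calc t - s = ((t-s)/δ) * δ := by field_simp
        _ < n * δ := by
            apply mul_lt_mul_of_pos_right hnd hδ
        _ = δ * n := by ring
    set r : ℕ → ℝ := fun i => s + i * c with hr
    have hr0 : r 0 = s := by simp [hr]
    have hrn : r n = t := by
      simp only [hr]
      have hnc : (n:ℝ) * c = t - s := by rw [hc]; field_simp
      linarith
    have hrmono : ∀ i j : ℕ, i ≤ j → r i ≤ r j := by
      intro i j hij
      simp only [hr]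
      have : (i:ℝ) ≤ j := Nat.cast_le.2 hij
      nlinarith
    have hrmem : ∀ i : ℕ, i ≤ n → r i ∈ Icc s t := by
      intro i hi
      constructor
      · rw [← hr0]; exact hrmono 0 i (Nat.zero_le _)
      · rw [← hrn]; exact hrmono i n hi
    -- integrability of the integrand on each piece
    have hfiint : ∀ i < n, IntervalIntegrable (fun r' => h r' * Real.exp (-μ * H r'))
        volume (r i) (r (i+1)) := by
      intro i hi
      apply (hfint.mono_set _).intervalIntegrable
      rw [uIcc_of_le (hrmono i (i+1) (Nat.le_succ _))]
      exact Icc_subset_Icc (hrmem i hi.le).1 (hrmem (i+1) hi).2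
    have hsplit := sum_integral_adjacent_intervals (μ := volume) hfiint
    rw [hr0, hrn] at hsplit
    -- bound each piece
    have piece : ∀ i < n, μ * ∫ x in r i..r (i+1), h x * Real.exp (-μ * H x)
        ≤ Real.exp (μ * ε) * (Real.exp (-μ * H (r i)) - Real.exp (-μ * H (r (i+1)))) := by
      intro i hi
      have hri := hrmem i hi.le
      have hri1 := hrmem (i+1) hi
      have hle : r i ≤ r (i+1) := hrmono i (i+1) (Nat.le_succ _)
      -- pointwise bound on the piece
      have hmono1 : ∫ x in r i..r (i+1), h x * Real.exp (-μ * H x)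
          ≤ ∫ x in r i..r (i+1), h x * Real.exp (-μ * H (r i)) := by
        apply integral_mono_ae_restrict hle (hfiint i hi)
          (((hii (r i) (r (i+1)) hri hri1)).mul_const _)
        have h1 : ∀ᵐ x ∂(volume.restrict (Icc (r i) (r (i+1)))), 0 ≤ h x :=
          ae_restrict_of_ae hnn
        have h2 : ∀ᵐ x ∂(volume.restrict (Icc (r i) (r (i+1)))),
            x ∈ Icc (r i) (r (i+1)) := ae_restrict_mem measurableSet_Icc
        filter_upwards [h1, h2] with x hx1 hx2
        have hxm : x ∈ Icc s t := ⟨le_trans hri.1 hx2.1, le_trans hx2.2 hri1.2⟩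
        have : H (r i) ≤ H x := hHmono (r i) hri x hxm hx2.1
        have : Real.exp (-μ * H x) ≤ Real.exp (-μ * H (r i)) := by
          apply Real.exp_le_exp.2; nlinarith
        nlinarith
      have heval : ∫ x in r i..r (i+1), h x * Real.exp (-μ * H (r i))
          = (H (r (i+1)) - H (r i)) * Real.exp (-μ * H (r i)) := by
        rw [intervalIntegral.integral_mul_const]
        congr 1
        exact (integral_interval_sub_left (hii s (r (i+1)) (left_mem_Icc.2 hst.le) hri1)
          (hii s (r i) (left_mem_Icc.2 hst.le) hri)).symm
      have hΔnn : 0 ≤ H (r (i+1)) - H (r i) := by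
        have := hHmono (r i) hri (r (i+1)) hri1 hle
        linarith
      have hΔε : H (r (i+1)) - H (r i) ≤ ε := by
        have hd : dist (r (i+1)) (r i) < δ := by
          rw [Real.dist_eq, abs_of_nonneg (by linarith)]
          have : r (i+1) - r i = c := by simp [hr]; ring
          linarith
        have := hδ' (r (i+1)) hri1 (r i) hri hd
        rw [Real.dist_eq] at this
        have := le_of_lt (abs_lt.1 this).2
        linarith
      have hs1 := step_ineq (x := H (r i)) hμ hΔnn hΔε
      calc μ * ∫ x in r i..r (i+1), h x * Real.exp (-μ * H x)
          ≤ μ * ((H (r (i+1)) - H (r i)) * Real.exp (-μ * H (r i))) := by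
            rw [← heval]; exact mul_le_mul_of_nonneg_left hmono1 hμ.le
        _ = μ * (H (r (i+1)) - H (r i)) * Real.exp (-μ * H (r i)) := by ring
        _ ≤ Real.exp (μ * ε) * (Real.exp (-μ * H (r i))
              - Real.exp (-μ * (H (r i) + (H (r (i+1)) - H (r i))))) := hs1
        _ = Real.exp (μ * ε) * (Real.exp (-μ * H (r i)) - Real.exp (-μ * H (r (i+1)))) := by
            ring_nf
    -- sum up
    calc μ * ∫ x in s..t, h x * Real.exp (-μ * H x)
        = ∑ i ∈ Finset.range n, μ * ∫ x in r i..r (i+1), h x * Real.exp (-μ * H x) := by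
          rw [← Finset.mul_sum, hsplit]
      _ ≤ ∑ i ∈ Finset.range n, Real.exp (μ * ε) * (Real.exp (-μ * H (r i))
            - Real.exp (-μ * H (r (i+1)))) := by
          apply Finset.sum_le_sum
          intro i hi
          exact piece i (Finset.mem_range.1 hi)
      _ = Real.exp (μ * ε) * ∑ i ∈ Finset.range n,
            (Real.exp (-μ * H (r i)) - Real.exp (-μ * H (r (i+1)))) := by
          rw [Finset.mul_sum]
      _ = Real.exp (μ * ε) * (Real.exp (-μ * H (r 0)) - Real.exp (-μ * H (r n))) := by
          rw [Finset.sum_range_sub' (fun i => Real.exp (-μ * H (r i)))]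
      _ = Real.exp (μ * ε) * (1 - Real.exp (-μ * H t)) := by
          rw [hr0, hrn, hHs]; simp
  -- take ε → 0⁺
  have hC : 0 ≤ 1 - Real.exp (-μ * H t) := by
    have : Real.exp (-μ * H t) ≤ 1 := Real.exp_le_one_iff.2 (by nlinarith)
    linarith
  have htend : Filter.Tendsto (fun ε : ℝ => Real.exp (μ * ε) * (1 - Real.exp (-μ * H t)))
      (nhdsWithin 0 (Ioi 0)) (nhds (1 * (1 - Real.exp (-μ * H t)))) := by
    apply Filter.Tendsto.mul _ tendsto_const_nhds
    have : Filter.Tendsto (fun ε : ℝ => Real.exp (μ * ε)) (nhds 0) (nhds (Real.exp (μ * 0))) :=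
      (Real.continuous_exp.comp (continuous_const.mul continuous_id)).tendsto 0
    simpa using this.mono_left nhdsWithin_le_nhds
  rw [one_mul] at htend
  apply ge_of_tendsto htend
  filter_upwards [self_mem_nhdsWithin] with ε hε
  exact main ε hε

/-- Claim A: `y t ≤ y s * exp (∫_s^t h)`. -/
lemma claimA (T a lam : ℝ) (hT : 0 < T) (ha : 0 < a) (y y' h : ℝ → ℝ)
    (hycont : ContinuousOn y (Ico 0 T))
    (hyderiv : ∀ t ∈ Ioo 0 T, HasDerivAt y (y' t) t)
    (hypos : ∀ t ∈ Ico 0 T, 0 < y t)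
    (hloc : LocallyIntegrable h volume)
    (hode : ∀ t ∈ Ioo 0 T, y' t + a * (y t) ^ lam ≤ h t * y t)
    {s t : ℝ} (hs : s ∈ Ico 0 T) (ht : t ∈ Ico 0 T) (hst : s ≤ t) :
    y t ≤ y s * Real.exp (∫ r in s..t, h r) := by
  have hsub : Icc s t ⊆ Ico 0 T := fun x hx => ⟨le_trans hs.1 hx.1, lt_of_le_of_lt hx.2 ht.2⟩
  have hlog : Real.log (y t) - Real.log (y s) ≤ ∫ r in s..t, h r := by
    apply sub_le_integral_of_hasDeriv_right_of_le hst
      (g := fun r => Real.log (y r)) (g' := fun r => y' r / y r)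
    · exact (hycont.mono hsub).log (fun x hx => (hypos x (hsub hx)).ne')
    · intro x hx
      have hx' : x ∈ Ioo 0 T := ⟨lt_of_le_of_lt hs.1 hx.1, lt_trans hx.2 ht.2⟩
      exact (((hyderiv x hx').log (hypos x (hsub (Ioo_subset_Icc_self hx))).ne')).hasDerivWithinAt
    · exact hloc.integrableOn_isCompact isCompact_Icc
    · intro x hx
      have hx' : x ∈ Ioo 0 T := ⟨lt_of_le_of_lt hs.1 hx.1, lt_trans hx.2 ht.2⟩
      have hy : 0 < y x := hypos x (hsub (Ioo_subset_Icc_self hx))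
      have h1 := hode x hx'
      have h2 : 0 ≤ a * (y x) ^ lam := by positivity
      rw [div_le_iff₀ hy]
      linarith
  have hys : 0 < y s := hypos s hs
  have hyt : 0 < y t := hypos t ht
  calc y t = Real.exp (Real.log (y t)) := (Real.exp_log hyt).symm
    _ ≤ Real.exp (Real.log (y s) + ∫ r in s..t, h r) := Real.exp_le_exp.2 (by linarith)
    _ = y s * Real.exp (∫ r in s..t, h r) := by rw [Real.exp_add, Real.exp_log hys]

theorem stmt_1 (lam T a b : ℝ) (hlam : 1 < lam) (hT : 0 < T) (ha : 0 < a) (hb : 0 < b)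
    (y y' h : ℝ → ℝ)
    (hycont : ContinuousOn y (Ico 0 T))
    (hyderiv : ∀ t ∈ Ioo 0 T, HasDerivAt y (y' t) t)
    (hypos : ∀ t ∈ Ico 0 T, 0 < y t)
    (hloc : LocallyIntegrable h volume)
    (hnn : ∀ᵐ s, 0 ≤ h s)
    (hwin : ∀ t ∈ Ioo 0 T, ∫ s in Ioc (max (t - 1) 0) t, h s ≤ b)
    (hode : ∀ t ∈ Ioo 0 T, y' t + a * (y t) ^ lam ≤ h t * y t) :
    ∀ t ∈ Ico 0 T, y t ≤ max (y 0 * Real.exp b) ((a * (lam - 1)) ^ (-(1 / (lam - 1))) * Real.exp b) := by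
  intro t ht
  have hy0 : 0 < y 0 := hypos 0 ⟨le_refl 0, hT⟩
  rcases le_or_gt t 1 with h1 | h1
  · -- case t ≤ 1 : use the trivial Gronwall bound from 0
    apply le_max_of_le_left
    have hA := claimA T a lam hT ha y y' h hycont hyderiv hypos hloc hode
      (s := 0) (t := t) ⟨le_refl 0, hT⟩ ht ht.1
    have hIb : ∫ r in (0:ℝ)..t, h r ≤ b := by
      rcases eq_or_lt_of_le ht.1 with h0 | h0
      · rw [← h0, intervalIntegral.integral_same]; exact hb.le
      · have hw := hwin t ⟨h0, ht.2⟩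
        rw [max_eq_right (by linarith : t - 1 ≤ 0)] at hw
        rwa [intervalIntegral.integral_of_le ht.1]
    calc y t ≤ y 0 * Real.exp (∫ r in (0:ℝ)..t, h r) := hA
      _ ≤ y 0 * Real.exp b := by
          apply mul_le_mul_of_nonneg_left (Real.exp_le_exp.2 hIb) hy0.le
  · -- case 1 < t
    apply le_max_of_le_right
    set m : ℝ := lam - 1 with hmdef
    have hm : 0 < m := by simp only [hmdef]; linarith
    set s₀ : ℝ := t - 1 with hs₀def
    have hs₀0 : 0 < s₀ := by simp only [hs₀def]; linarith
    have hs₀t : s₀ < t := by simp only [hs₀def]; linarith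
    have hs₀mem : s₀ ∈ Ico 0 T := ⟨hs₀0.le, lt_trans hs₀t ht.2⟩
    have hsub : Icc s₀ t ⊆ Ico 0 T := fun x hx => ⟨le_trans hs₀0.le hx.1, lt_of_le_of_lt hx.2 ht.2⟩
    have hint : IntegrableOn h (Icc s₀ t) := hloc.integrableOn_isCompact isCompact_Icc
    have hii : ∀ u v : ℝ, u ∈ Icc s₀ t → v ∈ Icc s₀ t → IntervalIntegrable h volume u v := by
      intro u v hu hv
      exact ((hint.mono_set (uIcc_subset_Icc hu hv))).intervalIntegrable
    set Ht : ℝ := ∫ u in s₀..t, h u with hHtdef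
    have hHtb : Ht ≤ b := by
      have hw := hwin t ⟨by linarith, ht.2⟩
      rw [max_eq_left (by linarith : (0:ℝ) ≤ t - 1)] at hw
      rw [hHtdef, intervalIntegral.integral_of_le hs₀t.le]
      exact hw
    have hHtnn : 0 ≤ Ht := integral_nonneg_of_ae hs₀t.le hnn
    -- w and its continuity
    set w : ℝ → ℝ := fun r => y r ^ (-m) with hwdef
    have hwpos : ∀ x ∈ Icc s₀ t, 0 < w x := fun x hx =>
      Real.rpow_pos_of_pos (hypos x (hsub hx)) _
    have hwcont : ContinuousOn w (Icc s₀ t) :=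
      (hycont.mono hsub).rpow_const (fun x hx => Or.inl (hypos x (hsub hx)).ne')
    -- step 3': pointwise bound on w from claim A
    have step3 : ∀ x ∈ Icc s₀ t,
        w x ≤ w t * Real.exp (m * (Ht - ∫ u in s₀..x, h u)) := by
      intro x hx
      have hxIco : x ∈ Ico 0 T := hsub hx
      have hyx : 0 < y x := hypos x hxIco
      have hyt : 0 < y t := hypos t ht
      set I : ℝ := ∫ r in x..t, h r with hIdef
      have hIeq : Ht - ∫ u in s₀..x, h u = I := by
        rw [hHtdef, hIdef]
        exact integral_interval_sub_left (hii s₀ t (left_mem_Icc.2 hs₀t.le)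
          (right_mem_Icc.2 hs₀t.le)) (hii s₀ x (left_mem_Icc.2 hs₀t.le) hx)
      have hA := claimA T a lam hT ha y y' h hycont hyderiv hypos hloc hode
        (s := x) (t := t) hxIco ht hx.2
      have hlb : y t * Real.exp (-I) ≤ y x := by
        have h2 := mul_le_mul_of_nonneg_right hA (Real.exp_pos (-I)).le
        rw [mul_assoc, ← Real.exp_add] at h2
        simpa [← hIdef] using h2
      have hanti : y x ^ (-m) ≤ (y t * Real.exp (-I)) ^ (-m) :=
        Real.rpow_le_rpow_of_nonpos (mul_pos hyt (Real.exp_pos (-I))) hlb (by linarith)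
      have hcalc : (y t * Real.exp (-I)) ^ (-m) = w t * Real.exp (m * I) := by
        rw [Real.mul_rpow hyt.le (Real.exp_pos _).le, ← Real.exp_mul]
        simp only [hwdef]
        ring_nf
      rw [hIeq]
      calc w x ≤ (y t * Real.exp (-I)) ^ (-m) := hanti
        _ = w t * Real.exp (m * I) := hcalc
    -- derivative of w and the pointwise differential inequality
    have hstep4 : w t ≥ w s₀ + m * a * (t - s₀) - m * ∫ r in s₀..t, h r * w r := by
      set wd : ℝ → ℝ := fun r => y' r * (-m) * y r ^ (-m - 1) with hwddef
      have hIhw : IntervalIntegrable (fun r => h r * w r) volume s₀ t := by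
        have := hint.mul_continuousOn hwcont isCompact_Icc
        rw [← uIcc_of_le hs₀t.le] at this
        exact this.intervalIntegrable
      have htool := sub_le_integral_of_hasDeriv_right_of_le (a := s₀) (b := t)
        (g := fun r => -(w r)) (g' := fun r => -(wd r))
        (φ := fun r => m * (h r * w r) - m * a) hs₀t.le
        hwcont.neg
        (by
          intro x hx
          have hx' : x ∈ Ioo 0 T := ⟨lt_trans hs₀0 hx.1, lt_trans hx.2 ht.2⟩
          have hyx : 0 < y x := hypos x ⟨hx'.1.le, hx'.2⟩
          have hd : HasDerivAt w (wd x) x := by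
            have := (hyderiv x hx').rpow_const (p := -m) (Or.inl hyx.ne')
            simpa [hwdef, hwddef] using this
          exact hd.neg.hasDerivWithinAt)
        (((hint.mul_continuousOn hwcont isCompact_Icc).const_mul m).sub
          (integrableOn_const measure_Icc_lt_top.ne))
        (by
          intro x hx
          have hx' : x ∈ Ioo 0 T := ⟨lt_trans hs₀0 hx.1, lt_trans hx.2 ht.2⟩
          have hyx : 0 < y x := hypos x ⟨hx'.1.le, hx'.2⟩
          have hode' := hode x hx'
          have hp : 0 < y x ^ (-m - 1) := Real.rpow_pos_of_pos hyx _
          have id1 : y x ^ (-m - 1) * y x = y x ^ (-m) := by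
            nth_rewrite 2 [← Real.rpow_one (y x)]
            rw [← Real.rpow_add hyx]
            norm_num
          have id2 : y x ^ (-m - 1) * y x ^ lam = 1 := by
            rw [← Real.rpow_add hyx]
            have : -m - 1 + lam = 0 := by simp only [hmdef]; ring
            rw [this, Real.rpow_zero]
          have h3 : y' x ≤ h x * y x - a * y x ^ lam := by linarith
          have h4 := mul_le_mul_of_nonneg_left h3 (mul_pos hm hp).le
          have e1 : m * y x ^ (-m - 1) * (h x * y x - a * y x ^ lam)
              = m * h x * (y x ^ (-m - 1) * y x) - m * a * (y x ^ (-m - 1) * y x ^ lam) := by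
            ring
          rw [id1, id2] at e1
          have h5 : m * y x ^ (-m - 1) * y' x ≤ m * h x * y x ^ (-m) - m * a := by
            rw [e1] at h4; linarith
          simp only [hwddef, hwdef]
          have e2 : -(y' x * -m * y x ^ (-m - 1)) = m * y x ^ (-m - 1) * y' x := by ring
          rw [e2]
          linarith [h5])
      -- evaluate the integral of φ
      have heval : ∫ r in s₀..t, (m * (h r * w r) - m * a)
          = m * (∫ r in s₀..t, h r * w r) - (t - s₀) * (m * a) := by
        rw [intervalIntegral.integral_sub (hIhw.const_mul m) intervalIntegrable_const,
          intervalIntegral.integral_const_mul, intervalIntegral.integral_const]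
        simp [smul_eq_mul]
      rw [heval] at htool
      have hws₀ : 0 < w s₀ := hwpos s₀ (left_mem_Icc.2 hs₀t.le)
      have htool2 : -w t - -w s₀ ≤ (m * ∫ r in s₀..t, h r * w r) - (t - s₀) * (m * a) := htool
      linarith [htool2, hws₀]
    -- step 5: bound the integral term
    have hwt : 0 < w t := hwpos t (right_mem_Icc.2 hs₀t.le)
    have step5 : m * (∫ r in s₀..t, h r * w r) ≤ w t * (Real.exp (m * b) - 1) := by
      have hIhw : IntervalIntegrable (fun r => h r * w r) volume s₀ t := by
        have := hint.mul_continuousOn hwcont isCompact_Icc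
        rw [← uIcc_of_le hs₀t.le] at this
        exact this.intervalIntegrable
      have hHcont : ContinuousOn (fun r => ∫ u in s₀..r, h u) (Icc s₀ t) := by
        have := intervalIntegral.continuousOn_primitive_interval
          (f := h) (μ := volume) (a := s₀) (b := t) (by rwa [uIcc_of_le hs₀t.le])
        rwa [uIcc_of_le hs₀t.le] at this
      have hgcont : ContinuousOn (fun r => w t * Real.exp (m * (Ht - ∫ u in s₀..r, h u)))
          (Icc s₀ t) :=
        continuousOn_const.mul (Real.continuous_exp.comp_continuousOn
          (continuousOn_const.mul (continuousOn_const.sub hHcont)))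
      have hI2 : IntervalIntegrable (fun r => h r * (w t * Real.exp (m * (Ht - ∫ u in s₀..r, h u))))
          volume s₀ t := by
        have := hint.mul_continuousOn hgcont isCompact_Icc
        rw [← uIcc_of_le hs₀t.le] at this
        exact this.intervalIntegrable
      have h5a : (∫ r in s₀..t, h r * w r)
          ≤ ∫ r in s₀..t, h r * (w t * Real.exp (m * (Ht - ∫ u in s₀..r, h u))) := by
        apply integral_mono_ae_restrict hs₀t.le hIhw hI2
        filter_upwards [ae_restrict_of_ae hnn, ae_restrict_mem measurableSet_Icc]
          with x hx1 hx2
        exact mul_le_mul_of_nonneg_left (step3 x hx2) hx1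
      have h5b : (∫ r in s₀..t, h r * (w t * Real.exp (m * (Ht - ∫ u in s₀..r, h u))))
          = (w t * Real.exp (m * Ht)) *
            ∫ r in s₀..t, h r * Real.exp (-m * ∫ u in s₀..r, h u) := by
        rw [← intervalIntegral.integral_const_mul]
        apply intervalIntegral.integral_congr
        intro x hx
        show h x * (w t * Real.exp (m * (Ht - ∫ u in s₀..x, h u)))
            = (w t * Real.exp (m * Ht)) * (h x * Real.exp (-m * ∫ u in s₀..x, h u))
        have he : m * (Ht - ∫ u in s₀..x, h u) = m * Ht + (-m * ∫ u in s₀..x, h u) := by ring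
        rw [he, Real.exp_add]
        ring
      have hL2 := key_L2 (s := s₀) (t := t) (μ := m) hs₀t hm hint hnn
      have hexp1 : Real.exp (m * Ht) * Real.exp (-m * Ht) = 1 := by
        rw [← Real.exp_add]; ring_nf; exact Real.exp_zero
      calc m * (∫ r in s₀..t, h r * w r)
          ≤ m * ((w t * Real.exp (m * Ht)) *
              ∫ r in s₀..t, h r * Real.exp (-m * ∫ u in s₀..r, h u)) := by
            apply mul_le_mul_of_nonneg_left _ hm.le
            rw [← h5b]; exact h5a
        _ = (w t * Real.exp (m * Ht)) *
              (m * ∫ r in s₀..t, h r * Real.exp (-m * ∫ u in s₀..r, h u)) := by ring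
        _ ≤ (w t * Real.exp (m * Ht)) * (1 - Real.exp (-m * Ht)) := by
            apply mul_le_mul_of_nonneg_left _ (by positivity)
            rw [hHtdef]
            exact hL2
        _ = w t * (Real.exp (m * Ht) - 1) := by
            linear_combination (-(w t)) * hexp1
        _ ≤ w t * (Real.exp (m * b) - 1) := by
            apply mul_le_mul_of_nonneg_left _ hwt.le
            have : Real.exp (m * Ht) ≤ Real.exp (m * b) :=
              Real.exp_le_exp.2 (by nlinarith)
            linarith
    -- combine: w t ≥ m * a * exp (-(m*b))
    have hts₀ : t - s₀ = 1 := by simp [hs₀def]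
    have hkey : m * a * Real.exp (-(m * b)) ≤ w t := by
      have hexp2 : Real.exp (m * b) * Real.exp (-(m * b)) = 1 := by
        rw [← Real.exp_add]; ring_nf; exact Real.exp_zero
      have hws₀ : 0 < w s₀ := hwpos s₀ (left_mem_Icc.2 hs₀t.le)
      have h6 : m * a ≤ w t * Real.exp (m * b) := by
        rw [hts₀] at hstep4
        linarith [hstep4, step5, hws₀]
      have h7 := mul_le_mul_of_nonneg_right h6 (Real.exp_pos (-(m * b))).le
      have h8 : w t * Real.exp (m * b) * Real.exp (-(m * b)) = w t := by
        rw [mul_assoc, hexp2, mul_one]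
      linarith [h7, h8]
    -- conclude
    by_contra hcon
    push_neg at hcon
    have hR : (0:ℝ) < (a * m) ^ (-(1 / m)) * Real.exp b := by
      have := Real.rpow_pos_of_pos (mul_pos ha hm) (-(1/m))
      positivity
    have hyt : 0 < y t := hypos t ht
    have hlt : w t < ((a * m) ^ (-(1 / m)) * Real.exp b) ^ (-m) := by
      simp only [hwdef]
      exact Real.rpow_lt_rpow_of_neg hR hcon (by linarith)
    have hRcalc : ((a * m) ^ (-(1 / m)) * Real.exp b) ^ (-m)
        = m * a * Real.exp (-(m * b)) := by
      rw [Real.mul_rpow (Real.rpow_nonneg (mul_pos ha hm).le _) (Real.exp_pos _).le,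
        ← Real.rpow_mul (mul_pos ha hm).le, ← Real.exp_mul]
      have h7 : -(1 / m) * -m = 1 := by field_simp
      rw [h7, Real.rpow_one]
      ring_nf
    rw [hRcalc] at hlt
    linarith
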